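/- Let l_1,…,l_m be linear forms in R = K[x_1,…,x_n] with char(K) ∤ m, set f = l_1⋯l_m, L_i = f/l_i, and 𝕀 = (L_1,…,L_m). Assume l_1,…,l_n are linearly independent (hence span the degree-1 part). Then the product P := L_1 L_2 ⋯ L_n belongs to J_f·𝕀^{n−1}. (Key facts: P = f·Q for some Q, l_j·Q = L_1⋯L̂_j⋯L_n ∈ 𝕀^{n−1} for 1 ≤ j ≤ n, and the Euler relation puts m·P = m·f·Q ∈ m·J_f·𝕀^{n−1}.) -/

import Mathlib

open MvPolynomial Finset

section Aux

variable {K : Type*} [CommRing K] {n : ℕ}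

private lemma euler_monomial (u : Fin n →₀ ℕ) (a : K) :
    ∑ j : Fin n, X j * pderiv j (monomial u a) = u.degree • monomial u a := by
  have key : ∀ j : Fin n, X j * pderiv j (monomial u a) = monomial u (a * u j) := by
    intro j
    rw [pderiv_monomial]
    by_cases h : u j = 0
    · simp [h]
    · have hle : Finsupp.single j 1 ≤ u :=
        Finsupp.single_le_iff.mpr (Nat.one_le_iff_ne_zero.mpr h)
      rw [show (X j : MvPolynomial (Fin n) K) = X j ^ 1 by rw [pow_one],
        ← monomial_single_add, add_tsub_cancel_of_le hle]
  rw [Finset.sum_congr rfl fun j _ => key j, ← map_sum, ← Finset.mul_sum]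
  have hdeg : (∑ j : Fin n, (u j : K)) = (u.degree : K) := by
    rw [Finsupp.degree_apply]
    push_cast
    exact (Finset.sum_subset (Finset.subset_univ _)
      (fun x _ hx => by simp [Finsupp.notMem_support_iff.mp hx])).symm
  rw [hdeg]
  rw [nsmul_eq_mul]
  rw [show ((u.degree : MvPolynomial (Fin n) K)) = C (u.degree : K) from (C_eq_coe_nat _).symm,
    C_mul_monomial, mul_comm]

private lemma euler {φ : MvPolynomial (Fin n) K} {d : ℕ} (hφ : φ.IsHomogeneous d) :
    ∑ j : Fin n, X j * pderiv j φ = d • φ := by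
  conv_lhs => rw [φ.as_sum]
  simp_rw [map_sum, Finset.mul_sum]
  rw [Finset.sum_comm]
  have : ∀ v ∈ φ.support, ∑ j : Fin n, X j * pderiv j (monomial v (coeff v φ))
      = d • monomial v (coeff v φ) := by
    intro v hv
    rw [euler_monomial]
    have hvd : v.degree = d := by
      by_contra hne
      exact (mem_support_iff.mp hv) (hφ.coeff_eq_zero hne)
    rw [hvd]
  rw [Finset.sum_congr rfl this, ← Finset.smul_sum, ← φ.as_sum]

private lemma hom1_mem {p : MvPolynomial (Fin n) K} (hp : p.IsHomogeneous 1) :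
    p ∈ Submodule.span K (Set.range (X : Fin n → MvPolynomial (Fin n) K)) := by
  rw [p.as_sum]
  refine Submodule.sum_mem _ fun v hv => ?_
  have hdeg : v.degree = 1 := by
    by_contra hne
    exact (mem_support_iff.mp hv) (hp.coeff_eq_zero hne)
  obtain ⟨j, rfl⟩ : ∃ j, v = Finsupp.single j 1 := by
    have h0 : v ≠ 0 := by
      intro h
      rw [h, map_zero] at hdeg
      exact one_ne_zero hdeg.symm
    obtain ⟨j, hj⟩ := Finsupp.support_nonempty_iff.mpr h0
    refine ⟨j, ?_⟩
    have hvj : v j = 1 := le_antisymm (hdeg ▸ Finsupp.le_degree j v)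
      (Nat.one_le_iff_ne_zero.mpr (Finsupp.mem_support_iff.mp hj))
    ext k
    rcases eq_or_ne k j with rfl | hk
    · simp [hvj]
    · rw [Finsupp.single_apply, if_neg (Ne.symm hk)]
      by_contra hvk
      have hkmem : k ∈ v.support := Finsupp.mem_support_iff.mpr hvk
      have hsub : ({j, k} : Finset (Fin n)) ⊆ v.support := by
        intro x hx
        rcases Finset.mem_insert.mp hx with rfl | hx
        · exact hj
        · rwa [Finset.mem_singleton.mp hx]
      have h2 : v j + v k ≤ v.degree := by
        have hs := Finset.sum_le_sum_of_subset (f := fun x => v x) hsub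
        rwa [Finset.sum_pair (Ne.symm hk)] at hs
      omega
  rw [← C_mul_X_eq_monomial, ← smul_eq_C_mul]
  exact Submodule.smul_mem _ _ (Submodule.subset_span ⟨j, rfl⟩)

end Aux

theorem stmt17 {K : Type*} [Field K] [Infinite K] {n m : ℕ}
    (hn : 1 ≤ n) (hnm : n + 1 ≤ m) (hchar : (m : K) ≠ 0)
    (l : Fin m → MvPolynomial (Fin n) K)
    (hl : ∀ i, (l i).IsHomogeneous 1)
    (hind : LinearIndependent K fun i : Fin n => l (Fin.castLE (by omega) i))
    (f : MvPolynomial (Fin n) K) (hf : f = ∏ i, l i)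
    (L : Fin m → MvPolynomial (Fin n) K)
    (hL : ∀ i, L i = ∏ j ∈ Finset.univ.erase i, l j)
    (I' : Ideal (MvPolynomial (Fin n) K)) (hI : I' = Ideal.span (Set.range L)) :
    (∏ i : Fin n, L (Fin.castLE (by omega) i)) ∈
      Ideal.span (Set.range fun j => pderiv j f) * I' ^ (n - 1) := by
  classical
  have hnm' : n ≤ m := by omega
  set e : Fin n → Fin m := Fin.castLE hnm' with he
  have einj : Function.Injective e := Fin.castLE_injective hnm'
  set J : Ideal (MvPolynomial (Fin n) K) := Ideal.span (Set.range fun j => pderiv j f) with hJ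
  have hfh : f.IsHomogeneous m := by
    rw [hf]
    have := IsHomogeneous.prod Finset.univ l (fun _ => 1) (fun i _ => hl i)
    simpa using this
  have hEuler : ∑ j : Fin n, X j * pderiv j f = m • f := euler hfh
  have hLI : ∀ i, L i ∈ I' := fun i => hI ▸ Ideal.subset_span ⟨i, rfl⟩
  have hfactor : ∀ i : Fin m, l i * L i = f := by
    intro i
    rw [hL, hf]
    exact Finset.mul_prod_erase Finset.univ l (Finset.mem_univ i)
  -- every product of L's over univ.erase k lies in I'^(n-1)
  have hT : ∀ k : Fin n, (∏ i ∈ Finset.univ.erase k, L (e i)) ∈ I' ^ (n - 1) := by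
    intro k
    have hcard : (Finset.univ.erase k).card = n - 1 := by
      rw [Finset.card_erase_of_mem (Finset.mem_univ k), Finset.card_univ, Fintype.card_fin]
    have := Ideal.prod_mem_prod (I := fun _ : Fin n => I')
      (s := Finset.univ.erase k) (x := fun i => L (e i)) (fun i _ => hLI (e i))
    rwa [Finset.prod_const, hcard] at this
  -- X j lies in the span of the l (e i)
  have hspan : ∀ j : Fin n, X j ∈ Submodule.span K (Set.range fun i : Fin n => l (e i)) := by
    intro j
    have hfd : FiniteDimensional K
        (Submodule.span K (Set.range (X : Fin n → MvPolynomial (Fin n) K))) :=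
      FiniteDimensional.span_of_finite K (Set.finite_range _)
    have hle : Submodule.span K (Set.range fun i : Fin n => l (e i)) ≤
        Submodule.span K (Set.range (X : Fin n → MvPolynomial (Fin n) K)) := by
      rw [Submodule.span_le]
      rintro _ ⟨i, rfl⟩
      exact hom1_mem (hl (e i))
    have h1 : Module.finrank K
        (Submodule.span K (Set.range fun i : Fin n => l (e i))) = n := by
      have h := linearIndependent_iff_card_eq_finrank_span.mp hind
      rw [Set.finrank] at h
      simpa using h.symm
    have h2 : Module.finrank K
        (Submodule.span K (Set.range (X : Fin n → MvPolynomial (Fin n) K))) ≤ n := by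
      simpa [Set.finrank] using finrank_range_le_card (X : Fin n → MvPolynomial (Fin n) K)
    have heq := Submodule.eq_of_le_of_finrank_le hle (by rw [h1]; exact h2)
    rw [heq]
    exact Submodule.subset_span ⟨j, rfl⟩
  have main : ∀ P : MvPolynomial (Fin n) K, (m : K) • P ∈ J * I' ^ (n - 1) →
      P ∈ J * I' ^ (n - 1) := by
    intro P hP
    rw [smul_eq_C_mul] at hP
    have h2 := Ideal.mul_mem_left _ (C ((m : K)⁻¹)) hP
    rwa [← mul_assoc, ← C_mul, inv_mul_cancel₀ hchar, C_1, one_mul] at h2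
  obtain hn1 | hn2 : n = 1 ∨ 2 ≤ n := by omega
  · subst hn1
    have key : L (e 0) ∈ J := by
      have hx : l (e 0) ∈ Submodule.span K (Set.range (X : Fin 1 → MvPolynomial (Fin 1) K)) :=
        hom1_mem (hl (e 0))
      rw [show Set.range (X : Fin 1 → MvPolynomial (Fin 1) K) = {X 0} from Set.range_unique] at hx
      obtain ⟨c, hc⟩ := Submodule.mem_span_singleton.mp hx
      have hne : l (e 0) ≠ 0 := hind.ne_zero 0
      have hc0 : c ≠ 0 := by
        rintro rfl
        rw [zero_smul] at hc
        exact hne hc.symm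
      have hfe : f = c • (X 0 * L (e 0)) := by
        rw [← hfactor (e 0), ← hc, smul_mul_assoc]
      have hEul1 : X 0 * pderiv 0 f = m • f := by
        have h3 := hEuler
        rwa [Fin.sum_univ_one] at h3
      have hX0 : (X 0 : MvPolynomial (Fin 1) K) ≠ 0 := X_ne_zero 0
      have hcancel : pderiv 0 f = ((m : K) * c) • L (e 0) := by
        apply mul_left_cancel₀ hX0
        rw [hEul1, hfe, mul_smul_comm, ← Nat.cast_smul_eq_nsmul K, smul_smul]
      have hLeq : L (e 0) = ((m : K) * c)⁻¹ • pderiv 0 f := by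
        rw [hcancel, smul_smul, inv_mul_cancel₀ (mul_ne_zero hchar hc0), one_smul]
      rw [hLeq, hJ, smul_eq_C_mul]
      exact Ideal.mul_mem_left _ _ (Ideal.subset_span ⟨0, rfl⟩)
    have hgoal : (∏ i : Fin 1, L (e i)) ∈ J * I' ^ (1 - 1) := by
      rw [Fin.prod_univ_one]
      simpa [Ideal.mul_top] using key
    exact hgoal
  · -- n ≥ 2
    have ec : ∀ (s : Finset (Fin m)) (x y : Fin m), (s.erase x).erase y = (s.erase y).erase x := by
      intro s x y
      ext z
      simp only [Finset.mem_erase]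
      tauto
    set a : Fin n := ⟨0, by omega⟩ with ha
    set b : Fin n := ⟨1, by omega⟩ with hb
    have hab : a ≠ b := by simp [ha, hb, Fin.ext_iff]
    have heab : e a ≠ e b := fun h => hab (einj h)
    set D : MvPolynomial (Fin n) K := ∏ j ∈ (Finset.univ.erase (e a)).erase (e b), l j with hD
    set Q : MvPolynomial (Fin n) K :=
      D * ∏ i ∈ (Finset.univ.erase a).erase b, L (e i) with hQ
    have hK2 : l (e a) * D = L (e b) := by
      rw [hD, hL, ec]
      exact Finset.mul_prod_erase _ l (Finset.mem_erase.mpr ⟨heab, Finset.mem_univ _⟩)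
    have hK3 : l (e b) * D = L (e a) := by
      rw [hD, hL]
      exact Finset.mul_prod_erase _ l (Finset.mem_erase.mpr ⟨Ne.symm heab, Finset.mem_univ _⟩)
    have h1 : f * D = L (e a) * L (e b) := by
      rw [← hfactor (e b), mul_right_comm, hK3]
    have hK4 : f * Q = ∏ i : Fin n, L (e i) := by
      rw [hQ, ← mul_assoc, h1, mul_assoc,
        Finset.mul_prod_erase _ (fun i => L (e i))
          (Finset.mem_erase.mpr ⟨Ne.symm hab, Finset.mem_univ b⟩),
        Finset.mul_prod_erase _ (fun i => L (e i)) (Finset.mem_univ a)]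
    have hK5 : ∀ k : Fin n, l (e k) * Q = ∏ i ∈ Finset.univ.erase k, L (e i) := by
      intro k
      rcases eq_or_ne k a with rfl | hka
      · rw [hQ, ← mul_assoc, hK2]
        exact Finset.mul_prod_erase _ (fun i => L (e i))
          (Finset.mem_erase.mpr ⟨Ne.symm hab, Finset.mem_univ b⟩)
      rcases eq_or_ne k b with rfl | hkb
      · rw [hQ, ← mul_assoc, hK3,
          show ((Finset.univ.erase a).erase b : Finset (Fin n))
              = (Finset.univ.erase b).erase a from by
            ext z; simp only [Finset.mem_erase]; tauto]
        exact Finset.mul_prod_erase _ (fun i => L (e i))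
          (Finset.mem_erase.mpr ⟨hab, Finset.mem_univ a⟩)
      · have hkmem : k ∈ (Finset.univ.erase a).erase b :=
          Finset.mem_erase.mpr ⟨hkb, Finset.mem_erase.mpr ⟨hka, Finset.mem_univ k⟩⟩
        rw [hQ, ← Finset.mul_prod_erase _ (fun i => L (e i)) hkmem,
          show l (e k) * (D * (L (e k) *
              ∏ i ∈ ((Finset.univ.erase a).erase b).erase k, L (e i)))
            = (l (e k) * L (e k)) *
              (D * ∏ i ∈ ((Finset.univ.erase a).erase b).erase k, L (e i)) from by ring,
          hfactor (e k), ← mul_assoc, h1, mul_assoc,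
          show ((Finset.univ.erase a).erase b).erase k
              = ((Finset.univ.erase k).erase a).erase b from by
            ext x
            simp only [Finset.mem_erase, Finset.mem_univ, and_true]
            tauto,
          Finset.mul_prod_erase _ (fun i => L (e i))
            (Finset.mem_erase.mpr ⟨Ne.symm hab,
              Finset.mem_erase.mpr ⟨Ne.symm hkb, Finset.mem_univ b⟩⟩)]
        exact Finset.mul_prod_erase _ (fun i => L (e i))
          (Finset.mem_erase.mpr ⟨Ne.symm hka, Finset.mem_univ a⟩)
    have hXQ : ∀ j : Fin n, X j * Q ∈ I' ^ (n - 1) := by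
      intro j
      obtain ⟨c, hc⟩ := (Submodule.mem_span_range_iff_exists_fun K).mp (hspan j)
      rw [← hc, Finset.sum_mul]
      refine Submodule.sum_mem _ fun k _ => ?_
      rw [smul_mul_assoc, hK5 k, smul_eq_C_mul]
      exact Ideal.mul_mem_left _ _ (hT k)
    refine main _ ?_
    have hsum : (m : K) • (∏ i : Fin n, L (e i)) = ∑ j : Fin n, pderiv j f * (X j * Q) := by
      rw [show ∑ j : Fin n, pderiv j f * (X j * Q)
            = (∑ j : Fin n, X j * pderiv j f) * Q from by
          rw [Finset.sum_mul]; exact Finset.sum_congr rfl fun j _ => by ring]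
      rw [hEuler, ← Nat.cast_smul_eq_nsmul K m f, smul_mul_assoc, hK4]
    rw [hsum]
    refine Submodule.sum_mem _ fun j _ => ?_
    refine Ideal.mul_mem_mul ?_ (hXQ j)
    rw [hJ]
    exact Ideal.subset_span ⟨j, rfl⟩
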